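/- Let H = {H_p}_{p∈Q} be a (not necessarily associative) Q-graded algebra in which each H_p is a (not necessarily coassociative) coalgebra and all multiplications and the unit are coalgebra maps. Then H is a Q-graded Hopf quasigroup if and only if: (1) each Δ_p is coassociative; (2) there is an almost-left-H-linear family β* with β*_{pq,q}∘β_{p,q} = id and β_{pq^{-1},q}∘β*_{p,q} = id, where β_{p,q}(h⊗g) = hg_{(1)}⊗g_{(2)}; and (3) there is an almost-right-H-linear family γ* with γ*_{p,pq}∘γ_{p,q} = id and γ_{p,p^{-1}q}∘γ*_{p,q} = id, where γ_{p,q}(h⊗g) = h_{(1)}⊗h_{(2)}g. -/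

import Mathlib

open TensorProduct

universe u v w

/-- A quasigroup: a set with product, identity `e`, and two-sided inverses satisfying
`p⁻¹(pq) = q` and `(qp)p⁻¹ = q`. -/
structure QuasigroupStruct (Q : Type u) where
  mul : Q → Q → Q
  one : Q
  inv : Q → Q
  mul_one : ∀ p, mul p one = p
  one_mul : ∀ p, mul one p = p
  inv_mul_cancel : ∀ p q, mul (inv p) (mul p q) = q
  mul_inv_cancel : ∀ p q, mul (mul q p) (inv p) = q

namespace QuasigroupStruct

variable {Q : Type u} (G : QuasigroupStruct Q)

lemma inv_mul_self (p : Q) : G.mul (G.inv p) p = G.one := by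
  have h := G.inv_mul_cancel p G.one
  rwa [G.mul_one] at h

lemma mul_inv_self (p : Q) : G.mul p (G.inv p) = G.one := by
  have h := G.mul_inv_cancel p G.one
  rwa [G.one_mul] at h

lemma inv_inv (p : Q) : G.inv (G.inv p) = p := by
  have h := G.inv_mul_cancel (G.inv p) p
  rw [G.inv_mul_self p] at h
  rwa [G.mul_one] at h

lemma mul_inv_cancel_left (p q : Q) : G.mul p (G.mul (G.inv p) q) = q := by
  have h := G.inv_mul_cancel (G.inv p) q
  rwa [G.inv_inv] at h

lemma inv_mul_cancel_right (p q : Q) : G.mul (G.mul q (G.inv p)) p = q := by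
  have h := G.mul_inv_cancel (G.inv p) q
  rwa [G.inv_inv] at h

lemma mul_inv_rev (p q : Q) : G.inv (G.mul p q) = G.mul (G.inv q) (G.inv p) := by
  have h1 : G.mul q (G.inv (G.mul p q)) = G.inv p := by
    have h := G.mul_inv_cancel (G.mul p q) (G.inv p)
    rwa [G.inv_mul_cancel p q] at h
  calc G.inv (G.mul p q)
      = G.mul (G.inv q) (G.mul q (G.inv (G.mul p q))) := (G.inv_mul_cancel q _).symm
    _ = G.mul (G.inv q) (G.inv p) := by rw [h1]

lemma inv_one : G.inv G.one = G.one := by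
  have h := G.inv_mul_cancel G.one G.one
  rwa [G.one_mul, G.mul_one] at h

end QuasigroupStruct

/-- Transport along an equality of grades, as a linear map. -/
def gcl {Q : Type u} {H : Q → Type w} {k : Type v} [CommSemiring k]
    [∀ p, AddCommMonoid (H p)] [∀ p, Module k (H p)] {p q : Q} (e : p = q) :
    H p →ₗ[k] H q := by subst e; exact LinearMap.id

/-- A `Q`-graded Hopf quasigroup: a family of coassociative counital coalgebras `H p`
with a (not necessarily associative) graded multiplication, unit and antipode family,
such that the multiplications and the unit are coalgebra maps and the antipode
satisfies the Hopf quasigroup axioms. -/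
structure GradedHopfQuasigroup (k : Type v) [CommRing k] {Q : Type u} (G : QuasigroupStruct Q)
    (H : Q → Type w) [∀ p, AddCommGroup (H p)] [∀ p, Module k (H p)]
    [∀ p, Coalgebra k (H p)] where
  mul : ∀ p q, H p →ₗ[k] H q →ₗ[k] H (G.mul p q)
  one : H G.one
  antipode : ∀ p, H p →ₗ[k] H (G.inv p)
  mul_one' : ∀ (p : Q) (h : H p), gcl (k := k) (G.mul_one p) ((mul p G.one h) one) = h
  one_mul' : ∀ (p : Q) (h : H p), gcl (k := k) (G.one_mul p) ((mul G.one p one) h) = h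
  comul_mul : ∀ (p q : Q) (h : H p) (g : H q),
    Coalgebra.comul (R := k) ((mul p q h) g) =
      (TensorProduct.map (TensorProduct.lift (mul p q)) (TensorProduct.lift (mul p q)))
        ((TensorProduct.tensorTensorTensorComm k (H p) (H p) (H q) (H q))
          (Coalgebra.comul h ⊗ₜ[k] Coalgebra.comul g))
  counit_mul : ∀ (p q : Q) (h : H p) (g : H q),
    Coalgebra.counit (R := k) ((mul p q h) g) =
      Coalgebra.counit (R := k) h * Coalgebra.counit (R := k) g
  comul_one : Coalgebra.comul (R := k) one = one ⊗ₜ[k] one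
  counit_one : Coalgebra.counit (R := k) one = 1
  /-- `S (h₁) (h₂ g) = ε(h) g` -/
  antipode_mul_left : ∀ (p q : Q) (h : H p) (g : H q),
    TensorProduct.lift
      (((mul (G.inv p) (G.mul p q)).comp (antipode p)).compl₂ ((mul p q).flip g))
      (Coalgebra.comul h)
      = gcl (k := k) (G.inv_mul_cancel p q).symm (Coalgebra.counit (R := k) h • g)
  /-- `h₁ (S (h₂) g) = ε(h) g` -/
  antipode_mul_left' : ∀ (p q : Q) (h : H p) (g : H q),
    TensorProduct.lift
      ((mul p (G.mul (G.inv p) q)).compl₂ (((mul (G.inv p) q).flip g).comp (antipode p)))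
      (Coalgebra.comul h)
      = gcl (k := k) (G.mul_inv_cancel_left p q).symm (Coalgebra.counit (R := k) h • g)
  /-- `(g S (h₁)) h₂ = ε(h) g` -/
  antipode_mul_right : ∀ (p q : Q) (h : H p) (g : H q),
    TensorProduct.lift
      ((mul (G.mul q (G.inv p)) p).comp ((mul q (G.inv p) g).comp (antipode p)))
      (Coalgebra.comul h)
      = gcl (k := k) (G.inv_mul_cancel_right p q).symm (Coalgebra.counit (R := k) h • g)
  /-- `(g h₁) S (h₂) = ε(h) g` -/
  antipode_mul_right' : ∀ (p q : Q) (h : H p) (g : H q),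
    TensorProduct.lift
      (((mul (G.mul q p) (G.inv p)).comp (mul q p g)).compl₂ (antipode p))
      (Coalgebra.comul h)
      = gcl (k := k) (G.mul_inv_cancel p q).symm (Coalgebra.counit (R := k) h • g)

variable {k : Type v} [Field k] {Q : Type u} {G : QuasigroupStruct Q}
  {H : Q → Type w} [∀ p, AddCommGroup (H p)] [∀ p, Module k (H p)]
  [∀ p, CoalgebraStruct k (H p)]

/-- A (not necessarily associative) `Q`-graded algebra whose components carry
(not necessarily coassociative) counital coalgebra structures, such that the
multiplications and the unit are coalgebra maps. -/
structure GradedQuasiBialgebra (k : Type v) [Field k] {Q : Type u}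
    (G : QuasigroupStruct Q) (H : Q → Type w)
    [∀ p, AddCommGroup (H p)] [∀ p, Module k (H p)]
    [∀ p, CoalgebraStruct k (H p)] where
  mul : ∀ p q, H p →ₗ[k] H q →ₗ[k] H (G.mul p q)
  one : H G.one
  mul_one' : ∀ (p : Q) (h : H p), gcl (k := k) (G.mul_one p) ((mul p G.one h) one) = h
  one_mul' : ∀ (p : Q) (h : H p), gcl (k := k) (G.one_mul p) ((mul G.one p one) h) = h
  comul_mul : ∀ (p q : Q) (h : H p) (g : H q),
    Coalgebra.comul (R := k) ((mul p q h) g) =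
      (TensorProduct.map (TensorProduct.lift (mul p q)) (TensorProduct.lift (mul p q)))
        ((TensorProduct.tensorTensorTensorComm k (H p) (H p) (H q) (H q))
          (Coalgebra.comul h ⊗ₜ[k] Coalgebra.comul g))
  counit_mul : ∀ (p q : Q) (h : H p) (g : H q),
    Coalgebra.counit (R := k) ((mul p q h) g) =
      Coalgebra.counit (R := k) h * Coalgebra.counit (R := k) g
  comul_one : Coalgebra.comul (R := k) one = one ⊗ₜ[k] one
  counit_one : Coalgebra.counit (R := k) one = 1
  counit_comul : ∀ (p : Q) (h : H p),
    (TensorProduct.lid k (H p))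
      ((LinearMap.rTensor (H p) (Coalgebra.counit (R := k))) (Coalgebra.comul h)) = h
  comul_counit : ∀ (p : Q) (h : H p),
    (TensorProduct.rid k (H p))
      ((LinearMap.lTensor (H p) (Coalgebra.counit (R := k))) (Coalgebra.comul h)) = h

variable (B : GradedQuasiBialgebra k G H)

/-- The right Galois map `β_{p,q}(h ⊗ g) = hg₁ ⊗ g₂`. -/
noncomputable def rightGalois (p q : Q) :
    H p ⊗[k] H q →ₗ[k] H (G.mul p q) ⊗[k] H q :=
  (TensorProduct.map (TensorProduct.lift (B.mul p q)) LinearMap.id) ∘ₗ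
    (TensorProduct.assoc k (H p) (H q) (H q)).symm.toLinearMap ∘ₗ
      (LinearMap.lTensor (H p) (Coalgebra.comul (R := k)))

/-- The left Galois map `γ_{p,q}(h ⊗ g) = h₁ ⊗ h₂g`. -/
noncomputable def leftGalois (p q : Q) :
    H p ⊗[k] H q →ₗ[k] H p ⊗[k] H (G.mul p q) :=
  (LinearMap.lTensor (H p) (TensorProduct.lift (B.mul p q))) ∘ₗ
    (TensorProduct.assoc k (H p) (H p) (H q)).toLinearMap ∘ₗ
      (LinearMap.rTensor (H q) (Coalgebra.comul (R := k)))

/-- Each `Δ_p` is coassociative. -/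
def Coassoc : Prop :=
  ∀ (p : Q) (h : H p),
    (TensorProduct.assoc k (H p) (H p) (H p))
        ((LinearMap.rTensor (H p) (Coalgebra.comul (R := k))) (Coalgebra.comul h))
      = (LinearMap.lTensor (H p) (Coalgebra.comul (R := k))) (Coalgebra.comul h)

/-- A family `φ_{p,q} : H_p ⊗ H_q → H_{pq⁻¹} ⊗ H_q` is almost left `H`-linear:
`φ_{p,q}(h ⊗ g) = (h ⊗ 1) φ_{e,q}(1 ⊗ g)`. -/
def AlmostLeftLinear
    (φ : ∀ p q : Q, H p ⊗[k] H q →ₗ[k] H (G.mul p (G.inv q)) ⊗[k] H q) : Prop :=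
  ∀ (p q : Q) (h : H p) (g : H q),
    φ p q (h ⊗ₜ[k] g)
      = (TensorProduct.map
          ((gcl (k := k) (show G.mul p (G.mul G.one (G.inv q)) = G.mul p (G.inv q)
              by rw [G.one_mul])) ∘ₗ (B.mul p (G.mul G.one (G.inv q)) h))
          ((gcl (k := k) (G.one_mul q)) ∘ₗ (B.mul G.one q B.one)))
        (φ G.one q (B.one ⊗ₜ[k] g))

/-- A family `φ_{p,q} : H_p ⊗ H_q → H_p ⊗ H_{p⁻¹q}` is almost right `H`-linear:
`φ_{p,q}(h ⊗ g) = φ_{p,e}(h ⊗ 1)(1 ⊗ g)`. -/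
def AlmostRightLinear
    (φ : ∀ p q : Q, H p ⊗[k] H q →ₗ[k] H p ⊗[k] H (G.mul (G.inv p) q)) : Prop :=
  ∀ (p q : Q) (h : H p) (g : H q),
    φ p q (h ⊗ₜ[k] g)
      = (TensorProduct.map
          ((gcl (k := k) (G.mul_one p)) ∘ₗ ((B.mul p G.one).flip B.one))
          ((gcl (k := k) (show G.mul (G.mul (G.inv p) G.one) q = G.mul (G.inv p) q
              by rw [G.mul_one])) ∘ₗ ((B.mul (G.mul (G.inv p) G.one) q).flip g)))
        (φ p G.one (h ⊗ₜ[k] B.one))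

/-- `H` is a `Q`-graded Hopf quasigroup: comultiplications are coassociative and
there is an antipode family satisfying the four Hopf quasigroup identities. -/
def IsGradedHopfQuasigroup : Prop :=
  Coassoc (k := k) (H := H) ∧
  ∃ S : ∀ p : Q, H p →ₗ[k] H (G.inv p),
    (∀ (p q : Q) (h : H p) (g : H q),
      TensorProduct.lift
        (((B.mul (G.inv p) (G.mul p q)).comp (S p)).compl₂ ((B.mul p q).flip g))
        (Coalgebra.comul h)
        = gcl (k := k) (G.inv_mul_cancel p q).symm (Coalgebra.counit (R := k) h • g)) ∧
    (∀ (p q : Q) (h : H p) (g : H q),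
      TensorProduct.lift
        ((B.mul p (G.mul (G.inv p) q)).compl₂ (((B.mul (G.inv p) q).flip g).comp (S p)))
        (Coalgebra.comul h)
        = gcl (k := k) (G.mul_inv_cancel_left p q).symm (Coalgebra.counit (R := k) h • g)) ∧
    (∀ (p q : Q) (h : H p) (g : H q),
      TensorProduct.lift
        ((B.mul (G.mul q (G.inv p)) p).comp ((B.mul q (G.inv p) g).comp (S p)))
        (Coalgebra.comul h)
        = gcl (k := k) (G.inv_mul_cancel_right p q).symm (Coalgebra.counit (R := k) h • g)) ∧
    (∀ (p q : Q) (h : H p) (g : H q),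
      TensorProduct.lift
        (((B.mul (G.mul q p) (G.inv p)).comp (B.mul q p g)).compl₂ (S p))
        (Coalgebra.comul h)
        = gcl (k := k) (G.mul_inv_cancel p q).symm (Coalgebra.counit (R := k) h • g))

set_option linter.unusedSectionVars false
set_option maxHeartbeats 1000000

section HopfAux

theorem gcl_rfl {p : Q} (e : p = p) (x : H p) : gcl (k := k) e x = x := rfl

theorem gcl_trans {p q r : Q} (e₁ : p = q) (e₂ : q = r) (x : H p) :
    gcl (k := k) e₂ (gcl (k := k) e₁ x) = gcl (k := k) (e₁.trans e₂) x := by subst e₁; rfl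

theorem gcl_cancel {p q : Q} (e : p = q) (e' : q = p) (x : H p) :
    gcl (k := k) e' (gcl (k := k) e x) = x := by subst e; rfl

theorem gcl_mul_left {p p' q : Q} (e : p = p') (e₂ : G.mul p q = G.mul p' q)
    (h : H p) (g : H q) :
    gcl (k := k) e₂ (B.mul p q h g) = B.mul p' q (gcl (k := k) e h) g := by subst e; rfl

theorem gcl_mul_right {p q q' : Q} (e : q = q') (e₂ : G.mul p q = G.mul p q')
    (h : H p) (g : H q) :
    gcl (k := k) e₂ (B.mul p q h g) = B.mul p q' h (gcl (k := k) e g) := by subst e; rfl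

theorem gcl_counit {p q : Q} (e : p = q) (x : H p) :
    Coalgebra.counit (R := k) (gcl (k := k) e x) = Coalgebra.counit (R := k) x := by
  subst e; rfl

theorem gcl_comul {p q : Q} (e : p = q) (x : H p) :
    Coalgebra.comul (R := k) (gcl (k := k) e x)
      = TensorProduct.map (gcl (k := k) e) (gcl (k := k) e) (Coalgebra.comul x) := by
  subst e; rw [show gcl (k := k) (rfl : p = p) = LinearMap.id from rfl, TensorProduct.map_id]; rfl

theorem mul_one_e (p : Q) (h : H p) :
    B.mul p G.one h B.one = gcl (k := k) (G.mul_one p).symm h := by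
  conv_rhs => rw [← B.mul_one' p h]
  rw [gcl_cancel]

theorem one_mul_e (p : Q) (h : H p) :
    B.mul G.one p B.one h = gcl (k := k) (G.one_mul p).symm h := by
  conv_rhs => rw [← B.one_mul' p h]
  rw [gcl_cancel]

/-! ### Structural tensor lemmas -/

section Structural

variable {M N P M' P' : Type*} [AddCommGroup M] [AddCommGroup N] [AddCommGroup P]
  [AddCommGroup M'] [AddCommGroup P'] [Module k M] [Module k N] [Module k P]
  [Module k M'] [Module k P']

theorem assoc_symm_tmul_right (a : M) (c : N ⊗[k] P) :
    (TensorProduct.assoc k M N P).symm (a ⊗ₜ[k] c)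
      = LinearMap.rTensor P (TensorProduct.mk k M N a) c := by
  induction c using TensorProduct.induction_on with
  | zero => simp
  | tmul x y => simp
  | add x y hx hy => simp [tmul_add, hx, hy]

theorem assoc_tmul_left (c : M ⊗[k] N) (b : P) :
    (TensorProduct.assoc k M N P) (c ⊗ₜ[k] b)
      = LinearMap.lTensor M ((TensorProduct.mk k N P).flip b) c := by
  induction c using TensorProduct.induction_on with
  | zero => simp
  | tmul x y => simp
  | add x y hx hy => simp [add_tmul, hx, hy]

theorem assoc_rTensor_nat (f : M →ₗ[k] M') (x : (M ⊗[k] N) ⊗[k] P) :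
    (TensorProduct.assoc k M' N P) (LinearMap.rTensor P (LinearMap.rTensor N f) x)
      = LinearMap.rTensor (N ⊗[k] P) f ((TensorProduct.assoc k M N P) x) := by
  induction x using TensorProduct.induction_on with
  | zero => simp
  | tmul c b =>
    induction c using TensorProduct.induction_on with
    | zero => simp
    | tmul u v => simp
    | add u v hu hv =>
      simp only [add_tmul, tmul_add, map_add, LinearMap.rTensor_tmul] at hu hv ⊢
      rw [hu, hv]
  | add u v hu hv => simp [hu, hv]

theorem assoc_symm_lTensor_nat (f : P →ₗ[k] P') (x : M ⊗[k] (N ⊗[k] P)) :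
    (TensorProduct.assoc k M N P').symm (LinearMap.lTensor M (LinearMap.lTensor N f) x)
      = LinearMap.lTensor (M ⊗[k] N) f ((TensorProduct.assoc k M N P).symm x) := by
  induction x using TensorProduct.induction_on with
  | zero => simp
  | tmul a c =>
    induction c using TensorProduct.induction_on with
    | zero => simp
    | tmul u v => simp
    | add u v hu hv =>
      simp only [add_tmul, tmul_add, map_add, LinearMap.lTensor_tmul] at hu hv ⊢
      rw [hu, hv]
  | add u v hu hv => simp [hu, hv]

end Structural

/-! ### Counit collapse lemmas -/

section Collapse

variable {M : Type*} [AddCommGroup M] [Module k M]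

include B in
theorem collapse_right {p : Q} (f : H p →ₗ[k] M) (h : H p) :
    (TensorProduct.rid k M)
      (LinearMap.lTensor M (Coalgebra.counit (R := k))
        (LinearMap.rTensor (H p) f (Coalgebra.comul (R := k) h))) = f h := by
  have nat : ∀ x : H p ⊗[k] H p,
      (TensorProduct.rid k M)
        (LinearMap.lTensor M (Coalgebra.counit (R := k)) (LinearMap.rTensor (H p) f x))
      = f ((TensorProduct.rid k (H p))
            (LinearMap.lTensor (H p) (Coalgebra.counit (R := k)) x)) := by
    intro x
    induction x using TensorProduct.induction_on with
    | zero => simp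
    | tmul a b => simp
    | add u v hu hv => simp [hu, hv]
  rw [nat, B.comul_counit]

include B in
theorem collapse_left {p : Q} (f : H p →ₗ[k] M) (h : H p) :
    (TensorProduct.lid k M)
      (LinearMap.rTensor M (Coalgebra.counit (R := k))
        (LinearMap.lTensor (H p) f (Coalgebra.comul (R := k) h))) = f h := by
  have nat : ∀ x : H p ⊗[k] H p,
      (TensorProduct.lid k M)
        (LinearMap.rTensor M (Coalgebra.counit (R := k)) (LinearMap.lTensor (H p) f x))
      = f ((TensorProduct.lid k (H p))
            (LinearMap.rTensor (H p) (Coalgebra.counit (R := k)) x)) := by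
    intro x
    induction x using TensorProduct.induction_on with
    | zero => simp
    | tmul a b => simp
    | add u v hu hv => simp [hu, hv]
  rw [nat, B.counit_comul]

include B in
theorem smul_collapse_right {p : Q} (m : M) (h : H p) :
    LinearMap.rTensor (H p) ((Coalgebra.counit (R := k)).smulRight m)
      (Coalgebra.comul (R := k) h) = m ⊗ₜ[k] h := by
  have nat : ∀ x : H p ⊗[k] H p,
      LinearMap.rTensor (H p) ((Coalgebra.counit (R := k)).smulRight m) x
        = (TensorProduct.mk k M (H p) m)
            ((TensorProduct.lid k (H p))
              (LinearMap.rTensor (H p) (Coalgebra.counit (R := k)) x)) := by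
    intro x
    induction x using TensorProduct.induction_on with
    | zero => simp
    | tmul a b => simp [TensorProduct.smul_tmul']
    | add u v hu hv => simp [tmul_add, hu, hv]
  rw [nat, B.counit_comul]; rfl

include B in
theorem smul_collapse_left {p : Q} (m : M) (h : H p) :
    LinearMap.lTensor (H p) ((Coalgebra.counit (R := k)).smulRight m)
      (Coalgebra.comul (R := k) h) = h ⊗ₜ[k] m := by
  have nat : ∀ x : H p ⊗[k] H p,
      LinearMap.lTensor (H p) ((Coalgebra.counit (R := k)).smulRight m) x
        = ((TensorProduct.mk k (H p) M).flip m)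
            ((TensorProduct.rid k (H p))
              (LinearMap.lTensor (H p) (Coalgebra.counit (R := k)) x)) := by
    intro x
    induction x using TensorProduct.induction_on with
    | zero => simp
    | tmul a b => simp [TensorProduct.tmul_smul]
    | add u v hu hv => simp [add_tmul, hu, hv]
  rw [nat, B.comul_counit]; rfl

end Collapse

/-! ### Galois maps on pure tensors -/

theorem rightGalois_tmul (p q : Q) (h : H p) (g : H q) :
    rightGalois B p q (h ⊗ₜ[k] g)
      = LinearMap.rTensor (H q) (B.mul p q h) (Coalgebra.comul (R := k) g) := by
  simp only [rightGalois, LinearMap.comp_apply, LinearMap.lTensor_tmul,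
    LinearEquiv.coe_coe]
  generalize Coalgebra.comul (R := k) g = c
  induction c using TensorProduct.induction_on with
  | zero => simp
  | tmul a b => simp
  | add u v hu hv => simp [tmul_add, hu, hv]

theorem leftGalois_tmul (p q : Q) (h : H p) (g : H q) :
    leftGalois B p q (h ⊗ₜ[k] g)
      = LinearMap.lTensor (H p) ((B.mul p q).flip g) (Coalgebra.comul (R := k) h) := by
  simp only [leftGalois, LinearMap.comp_apply, LinearMap.rTensor_tmul,
    LinearEquiv.coe_coe]
  generalize Coalgebra.comul (R := k) h = c
  induction c using TensorProduct.induction_on with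
  | zero => simp
  | tmul a b => simp
  | add u v hu hv => simp [add_tmul, hu, hv]

/-! ### Commuting lemma -/

section Comm
variable {M N M' P : Type*} [AddCommGroup M] [AddCommGroup N] [AddCommGroup M']
  [AddCommGroup P] [Module k M] [Module k N] [Module k M'] [Module k P]

theorem lTensor_rTensor_comm (f : M →ₗ[k] M') (g : N →ₗ[k] P) (x : M ⊗[k] N) :
    LinearMap.lTensor M' g (LinearMap.rTensor N f x)
      = LinearMap.rTensor P f (LinearMap.lTensor M g x) := by
  induction x using TensorProduct.induction_on with
  | zero => simp
  | tmul a b => simp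
  | add u v hu hv => simp [hu, hv]

end Comm

/-! ### betaOf / gammaOf -/

noncomputable def betaOf (S : ∀ p : Q, H p →ₗ[k] H (G.inv p)) (p q : Q) :
    H p ⊗[k] H q →ₗ[k] H (G.mul p (G.inv q)) ⊗[k] H q :=
  (TensorProduct.map (TensorProduct.lift ((B.mul p (G.inv q)).compl₂ (S q))) LinearMap.id) ∘ₗ
    (TensorProduct.assoc k (H p) (H q) (H q)).symm.toLinearMap ∘ₗ
      LinearMap.lTensor (H p) (Coalgebra.comul (R := k))

theorem betaOf_tmul (S : ∀ p : Q, H p →ₗ[k] H (G.inv p)) (p q : Q) (h : H p) (g : H q) :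
    betaOf B S p q (h ⊗ₜ[k] g)
      = LinearMap.rTensor (H q) ((B.mul p (G.inv q) h) ∘ₗ S q) (Coalgebra.comul (R := k) g) := by
  simp only [betaOf, LinearMap.comp_apply, LinearMap.lTensor_tmul, LinearEquiv.coe_coe]
  generalize Coalgebra.comul (R := k) g = c
  induction c using TensorProduct.induction_on with
  | zero => simp
  | tmul a b => simp
  | add u v hu hv => simp [tmul_add, hu, hv]

noncomputable def gammaOf (S : ∀ p : Q, H p →ₗ[k] H (G.inv p)) (p q : Q) :
    H p ⊗[k] H q →ₗ[k] H p ⊗[k] H (G.mul (G.inv p) q) :=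
  (LinearMap.lTensor (H p) (TensorProduct.lift ((B.mul (G.inv p) q).comp (S p)))) ∘ₗ
    (TensorProduct.assoc k (H p) (H p) (H q)).toLinearMap ∘ₗ
      LinearMap.rTensor (H q) (Coalgebra.comul (R := k))

theorem gammaOf_tmul (S : ∀ p : Q, H p →ₗ[k] H (G.inv p)) (p q : Q) (h : H p) (g : H q) :
    gammaOf B S p q (h ⊗ₜ[k] g)
      = LinearMap.lTensor (H p) (((B.mul (G.inv p) q).flip g) ∘ₗ S p)
          (Coalgebra.comul (R := k) h) := by
  simp only [gammaOf, LinearMap.comp_apply, LinearMap.rTensor_tmul, LinearEquiv.coe_coe]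
  generalize Coalgebra.comul (R := k) h = c
  induction c using TensorProduct.induction_on with
  | zero => simp
  | tmul a b => simp
  | add u v hu hv => simp [add_tmul, hu, hv]

/-! ### Core composition lemmas -/

theorem core_right (hco : Coassoc (k := k) (H := H)) {p r : Q}
    {M : Type*} [AddCommGroup M] [Module k M]
    (L : H r ⊗[k] H p →ₗ[k] M) (f : H p →ₗ[k] H r) (h : H p) :
    (TensorProduct.map L LinearMap.id)
      ((TensorProduct.assoc k (H r) (H p) (H p)).symm
        (LinearMap.lTensor (H r) (Coalgebra.comul (R := k))
          (LinearMap.rTensor (H p) f (Coalgebra.comul (R := k) h))))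
      = LinearMap.rTensor (H p) ((L ∘ₗ LinearMap.rTensor (H p) f) ∘ₗ Coalgebra.comul (R := k))
          (Coalgebra.comul (R := k) h) := by
  rw [lTensor_rTensor_comm, ← hco p h, ← assoc_rTensor_nat, LinearEquiv.symm_apply_apply]
  generalize Coalgebra.comul (R := k) h = z
  induction z using TensorProduct.induction_on with
  | zero => simp
  | tmul a b => simp
  | add u v hu hv => simp [hu, hv]

theorem core_left (hco : Coassoc (k := k) (H := H)) {p r : Q}
    {M : Type*} [AddCommGroup M] [Module k M]
    (L : H p ⊗[k] H r →ₗ[k] M) (f : H p →ₗ[k] H r) (h : H p) :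
    (LinearMap.lTensor (H p) L)
      ((TensorProduct.assoc k (H p) (H p) (H r))
        (LinearMap.rTensor (H r) (Coalgebra.comul (R := k))
          (LinearMap.lTensor (H p) f (Coalgebra.comul (R := k) h))))
      = LinearMap.lTensor (H p) ((L ∘ₗ LinearMap.lTensor (H p) f) ∘ₗ Coalgebra.comul (R := k))
          (Coalgebra.comul (R := k) h) := by
  rw [← lTensor_rTensor_comm]
  have hc : LinearMap.rTensor (H p) (Coalgebra.comul (R := k)) (Coalgebra.comul (R := k) h)
      = (TensorProduct.assoc k (H p) (H p) (H p)).symm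
          (LinearMap.lTensor (H p) (Coalgebra.comul (R := k)) (Coalgebra.comul (R := k) h)) := by
    rw [← hco p h, LinearEquiv.symm_apply_apply]
  rw [hc, ← assoc_symm_lTensor_nat, LinearEquiv.apply_symm_apply]
  generalize Coalgebra.comul (R := k) h = z
  induction z using TensorProduct.induction_on with
  | zero => simp
  | tmul a b => simp
  | add u v hu hv => simp [hu, hv]

/-! ### Unit cancellation helpers -/

theorem mul_unit_left_cancel {p r : Q} (h : H p) (x : H r)
    (e : G.mul p (G.mul G.one r) = G.mul p r) :
    gcl (k := k) e (B.mul p (G.mul G.one r) h (B.mul G.one r B.one x)) = B.mul p r h x := by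
  rw [one_mul_e, ← gcl_mul_right B ((G.one_mul r).symm) (by rw [G.one_mul]), gcl_cancel]

theorem mul_unit_right_cancel {r q : Q} (x : H r) (g : H q)
    (e : G.mul (G.mul r G.one) q = G.mul r q) :
    gcl (k := k) e (B.mul (G.mul r G.one) q (B.mul r G.one x B.one) g) = B.mul r q x g := by
  rw [mul_one_e, ← gcl_mul_left B ((G.mul_one r).symm) (by rw [G.mul_one]), gcl_cancel]

/-! ### The four composition identities -/

theorem betaOf_rightGalois (hco : Coassoc (k := k) (H := H))
    (S : ∀ p : Q, H p →ₗ[k] H (G.inv p)) (p q : Q) (h : H p) (g : H q) :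
    betaOf B S (G.mul p q) q (rightGalois B p q (h ⊗ₜ[k] g))
      = LinearMap.rTensor (H q)
          (TensorProduct.lift
            (((B.mul (G.mul p q) (G.inv q)).comp (B.mul p q h)).compl₂ (S q))
            ∘ₗ Coalgebra.comul (R := k))
          (Coalgebra.comul (R := k) g) := by
  rw [rightGalois_tmul]
  simp only [betaOf, LinearMap.comp_apply, LinearEquiv.coe_coe]
  rw [core_right hco]
  congr 1
  have : (TensorProduct.lift ((B.mul (G.mul p q) (G.inv q)).compl₂ (S q))
        ∘ₗ LinearMap.rTensor (H q) (B.mul p q h))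
      = TensorProduct.lift (((B.mul (G.mul p q) (G.inv q)).comp (B.mul p q h)).compl₂ (S q)) :=
    TensorProduct.ext' (fun a b => by simp)
  rw [← this]

theorem rightGalois_betaOf (hco : Coassoc (k := k) (H := H))
    (S : ∀ p : Q, H p →ₗ[k] H (G.inv p)) (p q : Q) (h : H p) (g : H q) :
    rightGalois B (G.mul p (G.inv q)) q (betaOf B S p q (h ⊗ₜ[k] g))
      = LinearMap.rTensor (H q)
          (TensorProduct.lift
            ((B.mul (G.mul p (G.inv q)) q).comp ((B.mul p (G.inv q) h).comp (S q)))
            ∘ₗ Coalgebra.comul (R := k))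
          (Coalgebra.comul (R := k) g) := by
  rw [betaOf_tmul]
  simp only [rightGalois, LinearMap.comp_apply, LinearEquiv.coe_coe]
  rw [core_right hco]
  congr 1
  have : (TensorProduct.lift (B.mul (G.mul p (G.inv q)) q)
        ∘ₗ LinearMap.rTensor (H q) ((B.mul p (G.inv q) h) ∘ₗ S q))
      = TensorProduct.lift
          ((B.mul (G.mul p (G.inv q)) q).comp ((B.mul p (G.inv q) h).comp (S q))) :=
    TensorProduct.ext' (fun a b => by simp)
  rw [← this]

theorem gammaOf_leftGalois (hco : Coassoc (k := k) (H := H))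
    (S : ∀ p : Q, H p →ₗ[k] H (G.inv p)) (p q : Q) (h : H p) (g : H q) :
    gammaOf B S p (G.mul p q) (leftGalois B p q (h ⊗ₜ[k] g))
      = LinearMap.lTensor (H p)
          (TensorProduct.lift
            (((B.mul (G.inv p) (G.mul p q)).comp (S p)).compl₂ ((B.mul p q).flip g))
            ∘ₗ Coalgebra.comul (R := k))
          (Coalgebra.comul (R := k) h) := by
  rw [leftGalois_tmul]
  simp only [gammaOf, LinearMap.comp_apply, LinearEquiv.coe_coe]
  rw [core_left hco]
  congr 1
  have : (TensorProduct.lift ((B.mul (G.inv p) (G.mul p q)).comp (S p))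
        ∘ₗ LinearMap.lTensor (H p) ((B.mul p q).flip g))
      = TensorProduct.lift
          (((B.mul (G.inv p) (G.mul p q)).comp (S p)).compl₂ ((B.mul p q).flip g)) :=
    TensorProduct.ext' (fun a b => by simp)
  rw [← this]

theorem leftGalois_gammaOf (hco : Coassoc (k := k) (H := H))
    (S : ∀ p : Q, H p →ₗ[k] H (G.inv p)) (p q : Q) (h : H p) (g : H q) :
    leftGalois B p (G.mul (G.inv p) q) (gammaOf B S p q (h ⊗ₜ[k] g))
      = LinearMap.lTensor (H p)
          (TensorProduct.lift
            ((B.mul p (G.mul (G.inv p) q)).compl₂ (((B.mul (G.inv p) q).flip g) ∘ₗ S p))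
            ∘ₗ Coalgebra.comul (R := k))
          (Coalgebra.comul (R := k) h) := by
  rw [gammaOf_tmul]
  simp only [leftGalois, LinearMap.comp_apply, LinearEquiv.coe_coe]
  rw [core_left hco]
  congr 1
  have : (TensorProduct.lift (B.mul p (G.mul (G.inv p) q))
        ∘ₗ LinearMap.lTensor (H p) (((B.mul (G.inv p) q).flip g) ∘ₗ S p))
      = TensorProduct.lift
          ((B.mul p (G.mul (G.inv p) q)).compl₂ (((B.mul (G.inv p) q).flip g) ∘ₗ S p)) :=
    TensorProduct.ext' (fun a b => by simp)
  rw [← this]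

/-! ### Almost linearity of betaOf / gammaOf -/

theorem almostLeft_betaOf (S : ∀ p : Q, H p →ₗ[k] H (G.inv p)) :
    AlmostLeftLinear B (betaOf B S) := by
  intro p q h g
  rw [betaOf_tmul, betaOf_tmul]
  generalize Coalgebra.comul (R := k) g = c
  induction c using TensorProduct.induction_on with
  | zero => simp
  | tmul a b =>
    simp only [LinearMap.rTensor_tmul, TensorProduct.map_tmul, LinearMap.comp_apply]
    rw [mul_unit_left_cancel, B.one_mul']
  | add u v hu hv => simp only [map_add, hu, hv]

theorem almostRight_gammaOf (S : ∀ p : Q, H p →ₗ[k] H (G.inv p)) :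
    AlmostRightLinear B (gammaOf B S) := by
  intro p q h g
  rw [gammaOf_tmul, gammaOf_tmul]
  generalize Coalgebra.comul (R := k) h = c
  induction c using TensorProduct.induction_on with
  | zero => simp
  | tmul a b =>
    simp only [LinearMap.lTensor_tmul, TensorProduct.map_tmul, LinearMap.comp_apply,
      LinearMap.flip_apply]
    rw [mul_unit_right_cancel, B.mul_one']
  | add u v hu hv => simp only [map_add, hu, hv]

/-! ### Forward direction: from antipode axioms to Galois inverses -/

theorem forward_beta1 (hco : Coassoc (k := k) (H := H)) (S : ∀ p : Q, H p →ₗ[k] H (G.inv p))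
    (ax4 : ∀ (p q : Q) (h : H p) (g : H q),
      TensorProduct.lift
        (((B.mul (G.mul q p) (G.inv p)).comp (B.mul q p g)).compl₂ (S p))
        (Coalgebra.comul h)
        = gcl (k := k) (G.mul_inv_cancel p q).symm (Coalgebra.counit (R := k) h • g)) :
    ∀ (p q : Q) (x : H p ⊗[k] H q),
      betaOf B S (G.mul p q) q (rightGalois B p q x)
        = LinearMap.rTensor (H q) (gcl (k := k) (G.mul_inv_cancel q p).symm) x := by
  intro p q x
  induction x using TensorProduct.induction_on with
  | zero => simp
  | tmul h g =>
    rw [betaOf_rightGalois B hco S p q h g]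
    have hmap : (TensorProduct.lift
          (((B.mul (G.mul p q) (G.inv q)).comp (B.mul p q h)).compl₂ (S q))
          ∘ₗ Coalgebra.comul (R := k))
        = (Coalgebra.counit (R := k)).smulRight
            (gcl (k := k) (G.mul_inv_cancel q p).symm h) := by
      apply LinearMap.ext; intro b
      rw [LinearMap.comp_apply, ax4 q p b h]
      simp
    rw [hmap, smul_collapse_right B]
    simp
  | add u v hu hv => simp [hu, hv]

theorem forward_beta2 (hco : Coassoc (k := k) (H := H)) (S : ∀ p : Q, H p →ₗ[k] H (G.inv p))
    (ax3 : ∀ (p q : Q) (h : H p) (g : H q),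
      TensorProduct.lift
        ((B.mul (G.mul q (G.inv p)) p).comp ((B.mul q (G.inv p) g).comp (S p)))
        (Coalgebra.comul h)
        = gcl (k := k) (G.inv_mul_cancel_right p q).symm (Coalgebra.counit (R := k) h • g)) :
    ∀ (p q : Q) (x : H p ⊗[k] H q),
      rightGalois B (G.mul p (G.inv q)) q (betaOf B S p q x)
        = LinearMap.rTensor (H q) (gcl (k := k) (G.inv_mul_cancel_right q p).symm) x := by
  intro p q x
  induction x using TensorProduct.induction_on with
  | zero => simp
  | tmul h g =>
    rw [rightGalois_betaOf B hco S p q h g]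
    have hmap : (TensorProduct.lift
          ((B.mul (G.mul p (G.inv q)) q).comp ((B.mul p (G.inv q) h).comp (S q)))
          ∘ₗ Coalgebra.comul (R := k))
        = (Coalgebra.counit (R := k)).smulRight
            (gcl (k := k) (G.inv_mul_cancel_right q p).symm h) := by
      apply LinearMap.ext; intro b
      rw [LinearMap.comp_apply, ax3 q p b h]
      simp
    rw [hmap, smul_collapse_right B]
    simp
  | add u v hu hv => simp [hu, hv]

theorem forward_gamma1 (hco : Coassoc (k := k) (H := H)) (S : ∀ p : Q, H p →ₗ[k] H (G.inv p))
    (ax1 : ∀ (p q : Q) (h : H p) (g : H q),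
      TensorProduct.lift
        (((B.mul (G.inv p) (G.mul p q)).comp (S p)).compl₂ ((B.mul p q).flip g))
        (Coalgebra.comul h)
        = gcl (k := k) (G.inv_mul_cancel p q).symm (Coalgebra.counit (R := k) h • g)) :
    ∀ (p q : Q) (x : H p ⊗[k] H q),
      gammaOf B S p (G.mul p q) (leftGalois B p q x)
        = LinearMap.lTensor (H p) (gcl (k := k) (G.inv_mul_cancel p q).symm) x := by
  intro p q x
  induction x using TensorProduct.induction_on with
  | zero => simp
  | tmul h g =>
    rw [gammaOf_leftGalois B hco S p q h g]
    have hmap : (TensorProduct.lift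
          (((B.mul (G.inv p) (G.mul p q)).comp (S p)).compl₂ ((B.mul p q).flip g))
          ∘ₗ Coalgebra.comul (R := k))
        = (Coalgebra.counit (R := k)).smulRight
            (gcl (k := k) (G.inv_mul_cancel p q).symm g) := by
      apply LinearMap.ext; intro b
      rw [LinearMap.comp_apply, ax1 p q b g]
      simp
    rw [hmap, smul_collapse_left B]
    simp
  | add u v hu hv => simp [hu, hv]

theorem forward_gamma2 (hco : Coassoc (k := k) (H := H)) (S : ∀ p : Q, H p →ₗ[k] H (G.inv p))
    (ax2 : ∀ (p q : Q) (h : H p) (g : H q),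
      TensorProduct.lift
        ((B.mul p (G.mul (G.inv p) q)).compl₂ (((B.mul (G.inv p) q).flip g).comp (S p)))
        (Coalgebra.comul h)
        = gcl (k := k) (G.mul_inv_cancel_left p q).symm (Coalgebra.counit (R := k) h • g)) :
    ∀ (p q : Q) (x : H p ⊗[k] H q),
      leftGalois B p (G.mul (G.inv p) q) (gammaOf B S p q x)
        = LinearMap.lTensor (H p) (gcl (k := k) (G.mul_inv_cancel_left p q).symm) x := by
  intro p q x
  induction x using TensorProduct.induction_on with
  | zero => simp
  | tmul h g =>
    rw [leftGalois_gammaOf B hco S p q h g]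
    have hmap : (TensorProduct.lift
          ((B.mul p (G.mul (G.inv p) q)).compl₂ (((B.mul (G.inv p) q).flip g) ∘ₗ S p))
          ∘ₗ Coalgebra.comul (R := k))
        = (Coalgebra.counit (R := k)).smulRight
            (gcl (k := k) (G.mul_inv_cancel_left p q).symm g) := by
      apply LinearMap.ext; intro b
      rw [LinearMap.comp_apply, ax2 p q b g]
      simp
    rw [hmap, smul_collapse_left B]
    simp
  | add u v hu hv => simp [hu, hv]

/-! ### Backward direction: constructing the antipode from Galois inverses -/

noncomputable def SbetaAux
    (βs : ∀ p q : Q, H p ⊗[k] H q →ₗ[k] H (G.mul p (G.inv q)) ⊗[k] H q) (q : Q) :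
    H q →ₗ[k] H (G.mul G.one (G.inv q)) :=
  (TensorProduct.rid k (H (G.mul G.one (G.inv q)))).toLinearMap ∘ₗ
    LinearMap.lTensor _ (Coalgebra.counit (R := k)) ∘ₗ βs G.one q ∘ₗ
      TensorProduct.mk k (H G.one) (H q) B.one

noncomputable def TgammaAux
    (γs : ∀ p q : Q, H p ⊗[k] H q →ₗ[k] H p ⊗[k] H (G.mul (G.inv p) q)) (p : Q) :
    H p →ₗ[k] H (G.mul (G.inv p) G.one) :=
  (TensorProduct.lid k (H (G.mul (G.inv p) G.one))).toLinearMap ∘ₗ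
    LinearMap.rTensor _ (Coalgebra.counit (R := k)) ∘ₗ γs p G.one ∘ₗ
      (TensorProduct.mk k (H p) (H G.one)).flip B.one

theorem comul_rightGalois (hco : Coassoc (k := k) (H := H)) {r q : Q}
    (y : H r ⊗[k] H q) :
    LinearMap.lTensor (H (G.mul r q)) (Coalgebra.comul (R := k)) (rightGalois B r q y)
      = (TensorProduct.assoc k (H (G.mul r q)) (H q) (H q))
          (LinearMap.rTensor (H q) (rightGalois B r q)
            ((TensorProduct.assoc k (H r) (H q) (H q)).symm
              (LinearMap.lTensor (H r) (Coalgebra.comul (R := k)) y))) := by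
  induction y using TensorProduct.induction_on with
  | zero => simp
  | tmul a b =>
    rw [rightGalois_tmul, lTensor_rTensor_comm, ← hco q b, ← assoc_rTensor_nat,
      LinearMap.lTensor_tmul, assoc_symm_tmul_right]
    have hmk : rightGalois B r q ∘ₗ TensorProduct.mk k (H r) (H q) a
        = LinearMap.rTensor (H q) (B.mul r q a) ∘ₗ Coalgebra.comul (R := k) :=
      LinearMap.ext (fun b₁ => rightGalois_tmul B r q a b₁)
    have : LinearMap.rTensor (H q) (rightGalois B r q)
          (LinearMap.rTensor (H q) (TensorProduct.mk k (H r) (H q) a)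
            (Coalgebra.comul (R := k) b))
        = LinearMap.rTensor (H q)
            (LinearMap.rTensor (H q) (B.mul r q a) ∘ₗ Coalgebra.comul (R := k))
            (Coalgebra.comul (R := k) b) := by
      rw [← LinearMap.comp_apply, ← LinearMap.rTensor_comp, hmk]
    rw [this, LinearMap.rTensor_comp, LinearMap.comp_apply]
  | add u v hu hv => simp [hu, hv]

theorem comul_leftGalois (hco : Coassoc (k := k) (H := H)) {p r : Q}
    (y : H p ⊗[k] H r) :
    LinearMap.rTensor (H (G.mul p r)) (Coalgebra.comul (R := k)) (leftGalois B p r y)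
      = (TensorProduct.assoc k (H p) (H p) (H (G.mul p r))).symm
          (LinearMap.lTensor (H p) (leftGalois B p r)
            ((TensorProduct.assoc k (H p) (H p) (H r))
              (LinearMap.rTensor (H r) (Coalgebra.comul (R := k)) y))) := by
  induction y using TensorProduct.induction_on with
  | zero => simp
  | tmul a b =>
    rw [leftGalois_tmul, ← lTensor_rTensor_comm]
    have hca : LinearMap.rTensor (H p) (Coalgebra.comul (R := k)) (Coalgebra.comul (R := k) a)
        = (TensorProduct.assoc k (H p) (H p) (H p)).symm
            (LinearMap.lTensor (H p) (Coalgebra.comul (R := k))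
              (Coalgebra.comul (R := k) a)) := by
      rw [← hco p a, LinearEquiv.symm_apply_apply]
    rw [hca, ← assoc_symm_lTensor_nat, LinearMap.rTensor_tmul, assoc_tmul_left]
    have hmk : leftGalois B p r ∘ₗ (TensorProduct.mk k (H p) (H r)).flip b
        = LinearMap.lTensor (H p) ((B.mul p r).flip b) ∘ₗ Coalgebra.comul (R := k) :=
      LinearMap.ext (fun a₁ => leftGalois_tmul B p r a₁ b)
    have : LinearMap.lTensor (H p) (leftGalois B p r)
          (LinearMap.lTensor (H p) ((TensorProduct.mk k (H p) (H r)).flip b)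
            (Coalgebra.comul (R := k) a))
        = LinearMap.lTensor (H p)
            (LinearMap.lTensor (H p) ((B.mul p r).flip b) ∘ₗ Coalgebra.comul (R := k))
            (Coalgebra.comul (R := k) a) := by
      rw [← LinearMap.comp_apply, ← LinearMap.lTensor_comp, hmk]
    rw [this, LinearMap.lTensor_comp, LinearMap.comp_apply]
  | add u v hu hv => simp [hu, hv]

include B in
theorem eps_mid_right {A : Type*} [AddCommGroup A] [Module k A] {q : Q}
    (z : A ⊗[k] H q) :
    LinearMap.rTensor (H q)
        ((TensorProduct.rid k A).toLinearMap ∘ₗ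
          LinearMap.lTensor A (Coalgebra.counit (R := k)))
        ((TensorProduct.assoc k A (H q) (H q)).symm
          (LinearMap.lTensor A (Coalgebra.comul (R := k)) z)) = z := by
  induction z using TensorProduct.induction_on with
  | zero => simp
  | tmul a b =>
    rw [LinearMap.lTensor_tmul, assoc_symm_tmul_right, ← LinearMap.comp_apply,
      ← LinearMap.rTensor_comp]
    have : ((TensorProduct.rid k A).toLinearMap ∘ₗ
          LinearMap.lTensor A (Coalgebra.counit (R := k))) ∘ₗ TensorProduct.mk k A (H q) a
        = (Coalgebra.counit (R := k)).smulRight a := LinearMap.ext (fun b₁ => by simp)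
    rw [this, smul_collapse_right B]
  | add u v hu hv => simp [hu, hv]

include B in
theorem eps_mid_left {A : Type*} [AddCommGroup A] [Module k A] {p : Q}
    (z : H p ⊗[k] A) :
    LinearMap.lTensor (H p)
        ((TensorProduct.lid k A).toLinearMap ∘ₗ
          LinearMap.rTensor A (Coalgebra.counit (R := k)))
        ((TensorProduct.assoc k (H p) (H p) A)
          (LinearMap.rTensor A (Coalgebra.comul (R := k)) z)) = z := by
  induction z using TensorProduct.induction_on with
  | zero => simp
  | tmul a b =>
    rw [LinearMap.rTensor_tmul, assoc_tmul_left, ← LinearMap.comp_apply,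
      ← LinearMap.lTensor_comp]
    have : ((TensorProduct.lid k A).toLinearMap ∘ₗ
          LinearMap.rTensor A (Coalgebra.counit (R := k))) ∘ₗ
            (TensorProduct.mk k (H p) A).flip b
        = (Coalgebra.counit (R := k)).smulRight b := LinearMap.ext (fun a₁ => by simp)
    rw [this, smul_collapse_left B]
  | add u v hu hv => simp [hu, hv]

theorem star_beta (hco : Coassoc (k := k) (H := H))
    (βs : ∀ p q : Q, H p ⊗[k] H q →ₗ[k] H (G.mul p (G.inv q)) ⊗[k] H q)
    (hALL : AlmostLeftLinear B βs)
    (hbb : ∀ (p q : Q) (x : H p ⊗[k] H q),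
      βs (G.mul p q) q (rightGalois B p q x)
        = LinearMap.rTensor (H q) (gcl (k := k) (G.mul_inv_cancel q p).symm) x)
    (hbb' : ∀ (p q : Q) (x : H p ⊗[k] H q),
      rightGalois B (G.mul p (G.inv q)) q (βs p q x)
        = LinearMap.rTensor (H q) (gcl (k := k) (G.inv_mul_cancel_right q p).symm) x)
    (q : Q) (g : H q) :
    βs G.one q (B.one ⊗ₜ[k] g)
      = LinearMap.rTensor (H q) (SbetaAux B βs q) (Coalgebra.comul (R := k) g) := by
  have L1 := hbb' G.one q (B.one ⊗ₜ[k] g)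
  have L1' := congrArg
    (LinearMap.lTensor (H (G.mul (G.mul G.one (G.inv q)) q)) (Coalgebra.comul (R := k))) L1
  rw [comul_rightGalois B hco] at L1'
  simp only [LinearMap.rTensor_tmul, LinearMap.lTensor_tmul] at L1'
  have L2 : LinearMap.rTensor (H q) (rightGalois B (G.mul G.one (G.inv q)) q)
        ((TensorProduct.assoc k (H (G.mul G.one (G.inv q))) (H q) (H q)).symm
          (LinearMap.lTensor (H (G.mul G.one (G.inv q))) (Coalgebra.comul (R := k))
            (βs G.one q (B.one ⊗ₜ[k] g))))
      = LinearMap.rTensor (H q)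
          (TensorProduct.mk k (H (G.mul (G.mul G.one (G.inv q)) q)) (H q)
            (gcl (k := k) (G.inv_mul_cancel_right q G.one).symm B.one))
          (Coalgebra.comul (R := k) g) := by
    have h2 := congrArg
      (TensorProduct.assoc k (H (G.mul (G.mul G.one (G.inv q)) q)) (H q) (H q)).symm L1'
    rw [LinearEquiv.symm_apply_apply] at h2
    rw [h2, assoc_symm_tmul_right]
  have keyALL : (βs (G.mul (G.mul G.one (G.inv q)) q) q) ∘ₗ
        TensorProduct.mk k (H (G.mul (G.mul G.one (G.inv q)) q)) (H q)
          (gcl (k := k) (G.inv_mul_cancel_right q G.one).symm B.one)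
      = (LinearMap.rTensor (H q)
          (gcl (k := k) (G.mul_inv_cancel q (G.mul G.one (G.inv q))).symm)) ∘ₗ
            (βs G.one q ∘ₗ TensorProduct.mk k (H G.one) (H q) B.one) := by
    apply LinearMap.ext; intro b
    simp only [LinearMap.comp_apply, TensorProduct.mk_apply]
    rw [hALL]
    generalize βs G.one q (B.one ⊗ₜ[k] b) = z
    induction z using TensorProduct.induction_on with
    | zero => simp
    | tmul u v =>
      simp only [TensorProduct.map_tmul, LinearMap.comp_apply, LinearMap.rTensor_tmul]
      rw [B.one_mul']
      rw [← gcl_mul_left B (G.inv_mul_cancel_right q G.one).symm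
        (congrArg (fun t => G.mul t (G.mul G.one (G.inv q)))
          (G.inv_mul_cancel_right q G.one).symm), one_mul_e, gcl_trans, gcl_trans]
    | add u v hu hv => simp only [map_add, hu, hv]
  have hcomp1 : (βs (G.mul (G.mul G.one (G.inv q)) q) q) ∘ₗ
        rightGalois B (G.mul G.one (G.inv q)) q
      = LinearMap.rTensor (H q)
          (gcl (k := k) (G.mul_inv_cancel q (G.mul G.one (G.inv q))).symm) :=
    LinearMap.ext (hbb (G.mul G.one (G.inv q)) q)
  have L3 := congrArg
    (LinearMap.rTensor (H q) (βs (G.mul (G.mul G.one (G.inv q)) q) q)) L2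
  have lhs_eq : ∀ u : (H (G.mul G.one (G.inv q)) ⊗[k] H q) ⊗[k] H q,
      LinearMap.rTensor (H q) (βs (G.mul (G.mul G.one (G.inv q)) q) q)
        (LinearMap.rTensor (H q) (rightGalois B (G.mul G.one (G.inv q)) q) u)
      = LinearMap.rTensor (H q)
          (LinearMap.rTensor (H q)
            (gcl (k := k) (G.mul_inv_cancel q (G.mul G.one (G.inv q))).symm)) u := by
    intro u
    rw [← LinearMap.comp_apply, ← LinearMap.rTensor_comp, hcomp1]
  have rhs_eq : ∀ u : H q ⊗[k] H q,
      LinearMap.rTensor (H q) (βs (G.mul (G.mul G.one (G.inv q)) q) q)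
        (LinearMap.rTensor (H q)
          (TensorProduct.mk k (H (G.mul (G.mul G.one (G.inv q)) q)) (H q)
            (gcl (k := k) (G.inv_mul_cancel_right q G.one).symm B.one)) u)
      = LinearMap.rTensor (H q)
          (LinearMap.rTensor (H q)
            (gcl (k := k) (G.mul_inv_cancel q (G.mul G.one (G.inv q))).symm))
          (LinearMap.rTensor (H q)
            (βs G.one q ∘ₗ TensorProduct.mk k (H G.one) (H q) B.one) u) := by
    intro u
    rw [← LinearMap.comp_apply, ← LinearMap.rTensor_comp, keyALL,
      LinearMap.rTensor_comp, LinearMap.comp_apply]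
  rw [lhs_eq, rhs_eq] at L3
  have cancel : ∀ u : (H (G.mul G.one (G.inv q)) ⊗[k] H q) ⊗[k] H q,
      LinearMap.rTensor (H q)
        (LinearMap.rTensor (H q)
          (gcl (k := k) (G.mul_inv_cancel q (G.mul G.one (G.inv q)))))
        (LinearMap.rTensor (H q)
          (LinearMap.rTensor (H q)
            (gcl (k := k) (G.mul_inv_cancel q (G.mul G.one (G.inv q))).symm)) u) = u := by
    intro u
    rw [← LinearMap.comp_apply, ← LinearMap.rTensor_comp, ← LinearMap.rTensor_comp]
    have : (gcl (k := k) (G.mul_inv_cancel q (G.mul G.one (G.inv q)))) ∘ₗ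
          (gcl (k := k) (G.mul_inv_cancel q (G.mul G.one (G.inv q))).symm)
        = (LinearMap.id : H (G.mul G.one (G.inv q)) →ₗ[k] _) :=
      LinearMap.ext (fun x => gcl_cancel _ _ x)
    rw [this, LinearMap.rTensor_id, LinearMap.rTensor_id]
    rfl
  have key : (TensorProduct.assoc k (H (G.mul G.one (G.inv q))) (H q) (H q)).symm
        (LinearMap.lTensor (H (G.mul G.one (G.inv q))) (Coalgebra.comul (R := k))
          (βs G.one q (B.one ⊗ₜ[k] g)))
      = LinearMap.rTensor (H q) (βs G.one q ∘ₗ TensorProduct.mk k (H G.one) (H q) B.one)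
          (Coalgebra.comul (R := k) g) := by
    have h4 := congrArg (LinearMap.rTensor (H q)
      (LinearMap.rTensor (H q)
        (gcl (k := k) (G.mul_inv_cancel q (G.mul G.one (G.inv q)))))) L3
    rw [cancel, cancel] at h4
    exact h4
  have final := congrArg (LinearMap.rTensor (H q)
    ((TensorProduct.rid k (H (G.mul G.one (G.inv q)))).toLinearMap ∘ₗ
      LinearMap.lTensor (H (G.mul G.one (G.inv q))) (Coalgebra.counit (R := k)))) key
  rw [eps_mid_right B, ← LinearMap.comp_apply, ← LinearMap.rTensor_comp] at final
  exact final

theorem star_gamma (hco : Coassoc (k := k) (H := H))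
    (γs : ∀ p q : Q, H p ⊗[k] H q →ₗ[k] H p ⊗[k] H (G.mul (G.inv p) q))
    (hARL : AlmostRightLinear B γs)
    (hgg : ∀ (p q : Q) (x : H p ⊗[k] H q),
      γs p (G.mul p q) (leftGalois B p q x)
        = LinearMap.lTensor (H p) (gcl (k := k) (G.inv_mul_cancel p q).symm) x)
    (hgg' : ∀ (p q : Q) (x : H p ⊗[k] H q),
      leftGalois B p (G.mul (G.inv p) q) (γs p q x)
        = LinearMap.lTensor (H p) (gcl (k := k) (G.mul_inv_cancel_left p q).symm) x)
    (p : Q) (h : H p) :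
    γs p G.one (h ⊗ₜ[k] B.one)
      = LinearMap.lTensor (H p) (TgammaAux B γs p) (Coalgebra.comul (R := k) h) := by
  have L1 := hgg' p G.one (h ⊗ₜ[k] B.one)
  have L1' := congrArg
    (LinearMap.rTensor (H (G.mul p (G.mul (G.inv p) G.one))) (Coalgebra.comul (R := k))) L1
  rw [comul_leftGalois B hco] at L1'
  simp only [LinearMap.rTensor_tmul, LinearMap.lTensor_tmul] at L1'
  have L2 : LinearMap.lTensor (H p) (leftGalois B p (G.mul (G.inv p) G.one))
        ((TensorProduct.assoc k (H p) (H p) (H (G.mul (G.inv p) G.one)))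
          (LinearMap.rTensor (H (G.mul (G.inv p) G.one)) (Coalgebra.comul (R := k))
            (γs p G.one (h ⊗ₜ[k] B.one))))
      = LinearMap.lTensor (H p)
          ((TensorProduct.mk k (H p) (H (G.mul p (G.mul (G.inv p) G.one)))).flip
            (gcl (k := k) (G.mul_inv_cancel_left p G.one).symm B.one))
          (Coalgebra.comul (R := k) h) := by
    have h2 := congrArg
      (TensorProduct.assoc k (H p) (H p) (H (G.mul p (G.mul (G.inv p) G.one)))) L1'
    rw [LinearEquiv.apply_symm_apply] at h2
    rw [h2, assoc_tmul_left]
  have keyARL : (γs p (G.mul p (G.mul (G.inv p) G.one))) ∘ₗ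
        (TensorProduct.mk k (H p) (H (G.mul p (G.mul (G.inv p) G.one)))).flip
          (gcl (k := k) (G.mul_inv_cancel_left p G.one).symm B.one)
      = (LinearMap.lTensor (H p)
          (gcl (k := k) (G.inv_mul_cancel p (G.mul (G.inv p) G.one)).symm)) ∘ₗ
            (γs p G.one ∘ₗ (TensorProduct.mk k (H p) (H G.one)).flip B.one) := by
    apply LinearMap.ext; intro a
    simp only [LinearMap.comp_apply, LinearMap.flip_apply, TensorProduct.mk_apply]
    rw [hARL]
    generalize γs p G.one (a ⊗ₜ[k] B.one) = z
    induction z using TensorProduct.induction_on with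
    | zero => simp
    | tmul u v =>
      simp only [TensorProduct.map_tmul, LinearMap.comp_apply, LinearMap.lTensor_tmul,
        LinearMap.flip_apply]
      rw [B.mul_one']
      rw [← gcl_mul_right B (G.mul_inv_cancel_left p G.one).symm
        (congrArg (G.mul (G.mul (G.inv p) G.one)) (G.mul_inv_cancel_left p G.one).symm),
        mul_one_e, gcl_trans, gcl_trans]
    | add u v hu hv => simp only [map_add, hu, hv]
  have hcomp1 : (γs p (G.mul p (G.mul (G.inv p) G.one))) ∘ₗ
        leftGalois B p (G.mul (G.inv p) G.one)
      = LinearMap.lTensor (H p)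
          (gcl (k := k) (G.inv_mul_cancel p (G.mul (G.inv p) G.one)).symm) :=
    LinearMap.ext (hgg p (G.mul (G.inv p) G.one))
  have L3 := congrArg
    (LinearMap.lTensor (H p) (γs p (G.mul p (G.mul (G.inv p) G.one)))) L2
  have lhs_eq : ∀ u : H p ⊗[k] (H p ⊗[k] H (G.mul (G.inv p) G.one)),
      LinearMap.lTensor (H p) (γs p (G.mul p (G.mul (G.inv p) G.one)))
        (LinearMap.lTensor (H p) (leftGalois B p (G.mul (G.inv p) G.one)) u)
      = LinearMap.lTensor (H p)
          (LinearMap.lTensor (H p)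
            (gcl (k := k) (G.inv_mul_cancel p (G.mul (G.inv p) G.one)).symm)) u := by
    intro u
    rw [← LinearMap.comp_apply, ← LinearMap.lTensor_comp, hcomp1]
  have rhs_eq : ∀ u : H p ⊗[k] H p,
      LinearMap.lTensor (H p) (γs p (G.mul p (G.mul (G.inv p) G.one)))
        (LinearMap.lTensor (H p)
          ((TensorProduct.mk k (H p) (H (G.mul p (G.mul (G.inv p) G.one)))).flip
            (gcl (k := k) (G.mul_inv_cancel_left p G.one).symm B.one)) u)
      = LinearMap.lTensor (H p)
          (LinearMap.lTensor (H p)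
            (gcl (k := k) (G.inv_mul_cancel p (G.mul (G.inv p) G.one)).symm))
          (LinearMap.lTensor (H p)
            (γs p G.one ∘ₗ (TensorProduct.mk k (H p) (H G.one)).flip B.one) u) := by
    intro u
    rw [← LinearMap.comp_apply, ← LinearMap.lTensor_comp, keyARL,
      LinearMap.lTensor_comp, LinearMap.comp_apply]
  rw [lhs_eq, rhs_eq] at L3
  have cancel : ∀ u : H p ⊗[k] (H p ⊗[k] H (G.mul (G.inv p) G.one)),
      LinearMap.lTensor (H p)
        (LinearMap.lTensor (H p)
          (gcl (k := k) (G.inv_mul_cancel p (G.mul (G.inv p) G.one))))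
        (LinearMap.lTensor (H p)
          (LinearMap.lTensor (H p)
            (gcl (k := k) (G.inv_mul_cancel p (G.mul (G.inv p) G.one)).symm)) u) = u := by
    intro u
    rw [← LinearMap.comp_apply, ← LinearMap.lTensor_comp, ← LinearMap.lTensor_comp]
    have : (gcl (k := k) (G.inv_mul_cancel p (G.mul (G.inv p) G.one))) ∘ₗ
          (gcl (k := k) (G.inv_mul_cancel p (G.mul (G.inv p) G.one)).symm)
        = (LinearMap.id : H (G.mul (G.inv p) G.one) →ₗ[k] _) :=
      LinearMap.ext (fun x => gcl_cancel _ _ x)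
    rw [this, LinearMap.lTensor_id, LinearMap.lTensor_id]
    rfl
  have key : (TensorProduct.assoc k (H p) (H p) (H (G.mul (G.inv p) G.one)))
        (LinearMap.rTensor (H (G.mul (G.inv p) G.one)) (Coalgebra.comul (R := k))
          (γs p G.one (h ⊗ₜ[k] B.one)))
      = LinearMap.lTensor (H p)
          (γs p G.one ∘ₗ (TensorProduct.mk k (H p) (H G.one)).flip B.one)
          (Coalgebra.comul (R := k) h) := by
    have h4 := congrArg (LinearMap.lTensor (H p)
      (LinearMap.lTensor (H p)
        (gcl (k := k) (G.inv_mul_cancel p (G.mul (G.inv p) G.one))))) L3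
    rw [cancel, cancel] at h4
    exact h4
  have final := congrArg (LinearMap.lTensor (H p)
    ((TensorProduct.lid k (H (G.mul (G.inv p) G.one))).toLinearMap ∘ₗ
      LinearMap.rTensor (H (G.mul (G.inv p) G.one)) (Coalgebra.counit (R := k)))) key
  rw [eps_mid_left B, ← LinearMap.comp_apply, ← LinearMap.lTensor_comp] at final
  exact final

noncomputable def Sback
    (βs : ∀ p q : Q, H p ⊗[k] H q →ₗ[k] H (G.mul p (G.inv q)) ⊗[k] H q) (r : Q) :
    H r →ₗ[k] H (G.inv r) :=
  gcl (k := k) (G.one_mul (G.inv r)) ∘ₗ SbetaAux B βs r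

noncomputable def Tback
    (γs : ∀ p q : Q, H p ⊗[k] H q →ₗ[k] H p ⊗[k] H (G.mul (G.inv p) q)) (r : Q) :
    H r →ₗ[k] H (G.inv r) :=
  gcl (k := k) (G.mul_one (G.inv r)) ∘ₗ TgammaAux B γs r

theorem betas_eq (hco : Coassoc (k := k) (H := H))
    (βs : ∀ p q : Q, H p ⊗[k] H q →ₗ[k] H (G.mul p (G.inv q)) ⊗[k] H q)
    (hALL : AlmostLeftLinear B βs)
    (hbb : ∀ (p q : Q) (x : H p ⊗[k] H q),
      βs (G.mul p q) q (rightGalois B p q x)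
        = LinearMap.rTensor (H q) (gcl (k := k) (G.mul_inv_cancel q p).symm) x)
    (hbb' : ∀ (p q : Q) (x : H p ⊗[k] H q),
      rightGalois B (G.mul p (G.inv q)) q (βs p q x)
        = LinearMap.rTensor (H q) (gcl (k := k) (G.inv_mul_cancel_right q p).symm) x)
    (p q : Q) :
    βs p q = betaOf B (Sback B βs) p q := by
  apply TensorProduct.ext'
  intro h g
  rw [betaOf_tmul, hALL, star_beta B hco βs hALL hbb hbb' q g]
  generalize Coalgebra.comul (R := k) g = z
  induction z using TensorProduct.induction_on with
  | zero => simp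
  | tmul a b =>
    simp only [TensorProduct.map_tmul, LinearMap.rTensor_tmul, LinearMap.comp_apply]
    rw [B.one_mul', gcl_mul_right B (G.one_mul (G.inv q))]
    rfl
  | add u v hu hv => simp only [map_add, hu, hv]

theorem gammas_eq (hco : Coassoc (k := k) (H := H))
    (γs : ∀ p q : Q, H p ⊗[k] H q →ₗ[k] H p ⊗[k] H (G.mul (G.inv p) q))
    (hARL : AlmostRightLinear B γs)
    (hgg : ∀ (p q : Q) (x : H p ⊗[k] H q),
      γs p (G.mul p q) (leftGalois B p q x)
        = LinearMap.lTensor (H p) (gcl (k := k) (G.inv_mul_cancel p q).symm) x)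
    (hgg' : ∀ (p q : Q) (x : H p ⊗[k] H q),
      leftGalois B p (G.mul (G.inv p) q) (γs p q x)
        = LinearMap.lTensor (H p) (gcl (k := k) (G.mul_inv_cancel_left p q).symm) x)
    (p q : Q) :
    γs p q = gammaOf B (Tback B γs) p q := by
  apply TensorProduct.ext'
  intro h g
  rw [gammaOf_tmul, hARL, star_gamma B hco γs hARL hgg hgg' p h]
  generalize Coalgebra.comul (R := k) h = z
  induction z using TensorProduct.induction_on with
  | zero => simp
  | tmul a b =>
    simp only [TensorProduct.map_tmul, LinearMap.lTensor_tmul, LinearMap.comp_apply,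
      LinearMap.flip_apply]
    rw [B.mul_one', gcl_mul_left B (G.mul_one (G.inv p))]
    rfl
  | add u v hu hv => simp only [map_add, hu, hv]

theorem bw_ax4 (hco : Coassoc (k := k) (H := H))
    (βs : ∀ p q : Q, H p ⊗[k] H q →ₗ[k] H (G.mul p (G.inv q)) ⊗[k] H q)
    (hALL : AlmostLeftLinear B βs)
    (hbb : ∀ (p q : Q) (x : H p ⊗[k] H q),
      βs (G.mul p q) q (rightGalois B p q x)
        = LinearMap.rTensor (H q) (gcl (k := k) (G.mul_inv_cancel q p).symm) x)
    (hbb' : ∀ (p q : Q) (x : H p ⊗[k] H q),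
      rightGalois B (G.mul p (G.inv q)) q (βs p q x)
        = LinearMap.rTensor (H q) (gcl (k := k) (G.inv_mul_cancel_right q p).symm) x) :
    ∀ (p q : Q) (h : H p) (g : H q),
      TensorProduct.lift
        (((B.mul (G.mul q p) (G.inv p)).comp (B.mul q p g)).compl₂ (Sback B βs p))
        (Coalgebra.comul h)
        = gcl (k := k) (G.mul_inv_cancel p q).symm (Coalgebra.counit (R := k) h • g) := by
  intro p q h g
  have h1 := hbb q p (g ⊗ₜ[k] h)
  rw [betas_eq B hco βs hALL hbb hbb' (G.mul q p) p,
    betaOf_rightGalois B hco (Sback B βs) q p g h] at h1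
  have h2 := congrArg (fun y => (TensorProduct.rid k (H (G.mul (G.mul q p) (G.inv p))))
    (LinearMap.lTensor (H (G.mul (G.mul q p) (G.inv p)))
      (Coalgebra.counit (R := k)) y)) h1
  rw [collapse_right B] at h2
  simp only [LinearMap.rTensor_tmul, LinearMap.lTensor_tmul, TensorProduct.rid_tmul,
    LinearMap.comp_apply] at h2
  rw [map_smul]
  exact h2

theorem bw_ax3 (hco : Coassoc (k := k) (H := H))
    (βs : ∀ p q : Q, H p ⊗[k] H q →ₗ[k] H (G.mul p (G.inv q)) ⊗[k] H q)
    (hALL : AlmostLeftLinear B βs)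
    (hbb : ∀ (p q : Q) (x : H p ⊗[k] H q),
      βs (G.mul p q) q (rightGalois B p q x)
        = LinearMap.rTensor (H q) (gcl (k := k) (G.mul_inv_cancel q p).symm) x)
    (hbb' : ∀ (p q : Q) (x : H p ⊗[k] H q),
      rightGalois B (G.mul p (G.inv q)) q (βs p q x)
        = LinearMap.rTensor (H q) (gcl (k := k) (G.inv_mul_cancel_right q p).symm) x) :
    ∀ (p q : Q) (h : H p) (g : H q),
      TensorProduct.lift
        ((B.mul (G.mul q (G.inv p)) p).comp ((B.mul q (G.inv p) g).comp (Sback B βs p)))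
        (Coalgebra.comul h)
        = gcl (k := k) (G.inv_mul_cancel_right p q).symm
            (Coalgebra.counit (R := k) h • g) := by
  intro p q h g
  have h1 := hbb' q p (g ⊗ₜ[k] h)
  rw [betas_eq B hco βs hALL hbb hbb' q p,
    rightGalois_betaOf B hco (Sback B βs) q p g h] at h1
  have h2 := congrArg (fun y => (TensorProduct.rid k (H (G.mul (G.mul q (G.inv p)) p)))
    (LinearMap.lTensor (H (G.mul (G.mul q (G.inv p)) p))
      (Coalgebra.counit (R := k)) y)) h1
  rw [collapse_right B] at h2
  simp only [LinearMap.rTensor_tmul, LinearMap.lTensor_tmul, TensorProduct.rid_tmul,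
    LinearMap.comp_apply] at h2
  rw [map_smul]
  exact h2

theorem bw_ax1 (hco : Coassoc (k := k) (H := H))
    (γs : ∀ p q : Q, H p ⊗[k] H q →ₗ[k] H p ⊗[k] H (G.mul (G.inv p) q))
    (hARL : AlmostRightLinear B γs)
    (hgg : ∀ (p q : Q) (x : H p ⊗[k] H q),
      γs p (G.mul p q) (leftGalois B p q x)
        = LinearMap.lTensor (H p) (gcl (k := k) (G.inv_mul_cancel p q).symm) x)
    (hgg' : ∀ (p q : Q) (x : H p ⊗[k] H q),
      leftGalois B p (G.mul (G.inv p) q) (γs p q x)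
        = LinearMap.lTensor (H p) (gcl (k := k) (G.mul_inv_cancel_left p q).symm) x) :
    ∀ (p q : Q) (h : H p) (g : H q),
      TensorProduct.lift
        (((B.mul (G.inv p) (G.mul p q)).comp (Tback B γs p)).compl₂ ((B.mul p q).flip g))
        (Coalgebra.comul h)
        = gcl (k := k) (G.inv_mul_cancel p q).symm (Coalgebra.counit (R := k) h • g) := by
  intro p q h g
  have h1 := hgg p q (h ⊗ₜ[k] g)
  rw [gammas_eq B hco γs hARL hgg hgg' p (G.mul p q),
    gammaOf_leftGalois B hco (Tback B γs) p q h g] at h1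
  have h2 := congrArg (fun y => (TensorProduct.lid k (H (G.mul (G.inv p) (G.mul p q))))
    (LinearMap.rTensor (H (G.mul (G.inv p) (G.mul p q)))
      (Coalgebra.counit (R := k)) y)) h1
  rw [collapse_left B] at h2
  simp only [LinearMap.rTensor_tmul, LinearMap.lTensor_tmul, TensorProduct.lid_tmul,
    LinearMap.comp_apply] at h2
  rw [map_smul]
  exact h2

theorem bw_ax2 (hco : Coassoc (k := k) (H := H))
    (γs : ∀ p q : Q, H p ⊗[k] H q →ₗ[k] H p ⊗[k] H (G.mul (G.inv p) q))
    (hARL : AlmostRightLinear B γs)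
    (hgg : ∀ (p q : Q) (x : H p ⊗[k] H q),
      γs p (G.mul p q) (leftGalois B p q x)
        = LinearMap.lTensor (H p) (gcl (k := k) (G.inv_mul_cancel p q).symm) x)
    (hgg' : ∀ (p q : Q) (x : H p ⊗[k] H q),
      leftGalois B p (G.mul (G.inv p) q) (γs p q x)
        = LinearMap.lTensor (H p) (gcl (k := k) (G.mul_inv_cancel_left p q).symm) x) :
    ∀ (p q : Q) (h : H p) (g : H q),
      TensorProduct.lift
        ((B.mul p (G.mul (G.inv p) q)).compl₂
          (((B.mul (G.inv p) q).flip g).comp (Tback B γs p)))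
        (Coalgebra.comul h)
        = gcl (k := k) (G.mul_inv_cancel_left p q).symm
            (Coalgebra.counit (R := k) h • g) := by
  intro p q h g
  have h1 := hgg' p q (h ⊗ₜ[k] g)
  rw [gammas_eq B hco γs hARL hgg hgg' p q,
    leftGalois_gammaOf B hco (Tback B γs) p q h g] at h1
  have h2 := congrArg (fun y => (TensorProduct.lid k (H (G.mul p (G.mul (G.inv p) q))))
    (LinearMap.rTensor (H (G.mul p (G.mul (G.inv p) q)))
      (Coalgebra.counit (R := k)) y)) h1
  rw [collapse_left B] at h2
  simp only [LinearMap.rTensor_tmul, LinearMap.lTensor_tmul, TensorProduct.lid_tmul,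
    LinearMap.comp_apply] at h2
  rw [map_smul]
  exact h2

noncomputable def uniqF (S T : ∀ r : Q, H r →ₗ[k] H (G.inv r)) (p : Q) :
    H p ⊗[k] (H p ⊗[k] H p) →ₗ[k] H (G.mul (G.mul (G.inv p) p) (G.inv p)) :=
  TensorProduct.lift ((B.mul (G.mul (G.inv p) p) (G.inv p)).compl₂ (S p)) ∘ₗ
    LinearMap.rTensor (H p) (TensorProduct.lift (B.mul (G.inv p) p)) ∘ₗ
      (TensorProduct.assoc k (H (G.inv p)) (H p) (H p)).symm.toLinearMap ∘ₗ
        LinearMap.rTensor (H p ⊗[k] H p) (T p)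

theorem ST_eq (hco : Coassoc (k := k) (H := H))
    (S T : ∀ r : Q, H r →ₗ[k] H (G.inv r))
    (axS4 : ∀ (p q : Q) (h : H p) (g : H q),
      TensorProduct.lift
        (((B.mul (G.mul q p) (G.inv p)).comp (B.mul q p g)).compl₂ (S p))
        (Coalgebra.comul h)
        = gcl (k := k) (G.mul_inv_cancel p q).symm (Coalgebra.counit (R := k) h • g))
    (axT1 : ∀ (p q : Q) (h : H p) (g : H q),
      TensorProduct.lift
        (((B.mul (G.inv p) (G.mul p q)).comp (T p)).compl₂ ((B.mul p q).flip g))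
        (Coalgebra.comul h)
        = gcl (k := k) (G.inv_mul_cancel p q).symm (Coalgebra.counit (R := k) h • g))
    (p : Q) : T p = S p := by
  apply LinearMap.ext; intro h
  have sub1 : ∀ (a : H p) (c : H p ⊗[k] H p),
      uniqF B S T p (a ⊗ₜ[k] c)
        = TensorProduct.lift
            (((B.mul (G.mul (G.inv p) p) (G.inv p)).comp
              (B.mul (G.inv p) p (T p a))).compl₂ (S p)) c := by
    intro a c
    induction c using TensorProduct.induction_on with
    | zero => simp
    | tmul u v => simp [uniqF]
    | add u v hu hv => simp [tmul_add, hu, hv]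
  have step1 : ∀ z : H p ⊗[k] H p,
      uniqF B S T p (LinearMap.lTensor (H p) (Coalgebra.comul (R := k)) z)
        = (TensorProduct.rid k (H (G.mul (G.mul (G.inv p) p) (G.inv p))))
            (LinearMap.lTensor (H (G.mul (G.mul (G.inv p) p) (G.inv p)))
              (Coalgebra.counit (R := k))
              (LinearMap.rTensor (H p)
                ((gcl (k := k) (G.mul_inv_cancel p (G.inv p)).symm) ∘ₗ T p) z)) := by
    intro z
    induction z using TensorProduct.induction_on with
    | zero => simp
    | tmul a b =>
      rw [LinearMap.lTensor_tmul, sub1, axS4 p (G.inv p) b (T p a)]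
      simp [map_smul]
    | add u v hu hv => simp [hu, hv]
  have eval1 : uniqF B S T p
        (LinearMap.lTensor (H p) (Coalgebra.comul (R := k)) (Coalgebra.comul (R := k) h))
      = gcl (k := k) (G.mul_inv_cancel p (G.inv p)).symm (T p h) := by
    rw [step1, collapse_right B]
    rfl
  have Tunit : ∀ a : H p,
      TensorProduct.lift ((B.mul (G.inv p) p).comp (T p)) (Coalgebra.comul (R := k) a)
        = gcl (k := k) (G.inv_mul_self p).symm (Coalgebra.counit (R := k) a • B.one) := by
    intro a
    have h1 := axT1 p G.one a B.one
    have hmapeq : (((B.mul (G.inv p) (G.mul p G.one)).comp (T p)).compl₂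
          ((B.mul p G.one).flip B.one))
        = ((B.mul (G.inv p) p).comp (T p)).compr₂
            (gcl (k := k) (congrArg (G.mul (G.inv p)) (G.mul_one p).symm)) := by
      apply LinearMap.ext₂; intro u v
      simp only [LinearMap.compl₂_apply, LinearMap.comp_apply, LinearMap.flip_apply,
        LinearMap.compr₂_apply]
      rw [mul_one_e, ← gcl_mul_right B (G.mul_one p).symm
        (congrArg (G.mul (G.inv p)) (G.mul_one p).symm)]
    rw [hmapeq, TensorProduct.lift_compr₂, LinearMap.comp_apply] at h1
    have h2 := congrArg (gcl (k := k) (congrArg (G.mul (G.inv p)) (G.mul_one p))) h1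
    rw [gcl_cancel, gcl_trans] at h2
    exact h2
  have sub2 : ∀ (b : H p) (c : H p ⊗[k] H p),
      uniqF B S T p (LinearMap.lTensor (H p) ((TensorProduct.mk k (H p) (H p)).flip b) c)
        = ((B.mul (G.mul (G.inv p) p) (G.inv p)).flip (S p b))
            (TensorProduct.lift ((B.mul (G.inv p) p).comp (T p)) c) := by
    intro b c
    induction c using TensorProduct.induction_on with
    | zero => simp
    | tmul u v => simp [uniqF]
    | add u v hu hv => simp [hu, hv]
  have step2 : ∀ z : H p ⊗[k] H p,
      uniqF B S T p ((TensorProduct.assoc k (H p) (H p) (H p))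
          (LinearMap.rTensor (H p) (Coalgebra.comul (R := k)) z))
        = (TensorProduct.lid k (H (G.mul (G.mul (G.inv p) p) (G.inv p))))
            (LinearMap.rTensor (H (G.mul (G.mul (G.inv p) p) (G.inv p)))
              (Coalgebra.counit (R := k))
              (LinearMap.lTensor (H p)
                ((gcl (k := k) (G.mul_inv_cancel p (G.inv p)).symm) ∘ₗ S p) z)) := by
    intro z
    induction z using TensorProduct.induction_on with
    | zero => simp
    | tmul a b =>
      rw [LinearMap.rTensor_tmul, assoc_tmul_left, sub2, Tunit, map_smul, map_smul]
      simp only [LinearMap.flip_apply]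
      rw [← gcl_mul_left B (G.inv_mul_self p).symm
        (congrArg (fun t => G.mul t (G.inv p)) (G.inv_mul_self p).symm),
        one_mul_e, gcl_trans]
      simp [LinearMap.lTensor_tmul, TensorProduct.lid_tmul]
    | add u v hu hv => simp [hu, hv]
  have eval2 : uniqF B S T p
        (LinearMap.lTensor (H p) (Coalgebra.comul (R := k)) (Coalgebra.comul (R := k) h))
      = gcl (k := k) (G.mul_inv_cancel p (G.inv p)).symm (S p h) := by
    rw [← hco p h, step2, collapse_left B]
    rfl
  have h4 := eval1.symm.trans eval2
  have h5 := congrArg (gcl (k := k) (G.mul_inv_cancel p (G.inv p))) h4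
  rw [gcl_cancel, gcl_cancel] at h5
  exact h5

end HopfAux
/-- `H` is a `Q`-graded Hopf quasigroup iff the comultiplications are coassociative
and both Galois maps are invertible by almost `H`-linear families. -/
theorem gradedQuasiBialgebra_hopf_iff_galois :
    IsGradedHopfQuasigroup B ↔
      (Coassoc (k := k) (H := H) ∧
      (∃ βs : ∀ p q : Q, H p ⊗[k] H q →ₗ[k] H (G.mul p (G.inv q)) ⊗[k] H q,
        AlmostLeftLinear B βs ∧
        (∀ (p q : Q) (x : H p ⊗[k] H q),
          βs (G.mul p q) q (rightGalois B p q x)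
            = (LinearMap.rTensor (H q)
                (gcl (k := k) (G.mul_inv_cancel q p).symm)) x) ∧
        (∀ (p q : Q) (x : H p ⊗[k] H q),
          rightGalois B (G.mul p (G.inv q)) q (βs p q x)
            = (LinearMap.rTensor (H q)
                (gcl (k := k) (G.inv_mul_cancel_right q p).symm)) x)) ∧
      (∃ γs : ∀ p q : Q, H p ⊗[k] H q →ₗ[k] H p ⊗[k] H (G.mul (G.inv p) q),
        AlmostRightLinear B γs ∧
        (∀ (p q : Q) (x : H p ⊗[k] H q),
          γs p (G.mul p q) (leftGalois B p q x)
            = (LinearMap.lTensor (H p)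
                (gcl (k := k) (G.inv_mul_cancel p q).symm)) x) ∧
        (∀ (p q : Q) (x : H p ⊗[k] H q),
          leftGalois B p (G.mul (G.inv p) q) (γs p q x)
            = (LinearMap.lTensor (H p)
                (gcl (k := k) (G.mul_inv_cancel_left p q).symm)) x))) := by
  constructor
  · rintro ⟨hco, S, ax1, ax2, ax3, ax4⟩
    exact ⟨hco,
      ⟨betaOf B S, almostLeft_betaOf B S, forward_beta1 B hco S ax4, forward_beta2 B hco S ax3⟩,
      ⟨gammaOf B S, almostRight_gammaOf B S, forward_gamma1 B hco S ax1,
        forward_gamma2 B hco S ax2⟩⟩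
  · rintro ⟨hco, ⟨βs, hALL, hbb, hbb'⟩, ⟨γs, hARL, hgg, hgg'⟩⟩
    have ax4 := bw_ax4 B hco βs hALL hbb hbb'
    have ax3 := bw_ax3 B hco βs hALL hbb hbb'
    have ax1T := bw_ax1 B hco γs hARL hgg hgg'
    have ax2T := bw_ax2 B hco γs hARL hgg hgg'
    have hTS : ∀ p, Tback B γs p = Sback B βs p :=
      ST_eq B hco (Sback B βs) (Tback B γs) ax4 ax1T
    refine ⟨hco, Sback B βs, ?_, ?_, ax3, ax4⟩
    · intro p q h g
      have hx := ax1T p q h g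
      rwa [hTS p] at hx
    · intro p q h g
      have hx := ax2T p q h g
      rwa [hTS p] at hx
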